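/- Let E be a finite directed graph with vertex matrix A and suppose E has at least one cycle. Let K be the union of the minimal critical components (components C with ρ(A_C) = ρ(A), minimal among such), and H the hereditary closure of K. Then ρ(A_{E^0∖H}) < ρ(A). -/

import Mathlib

open scoped Classical

def IsPathFun {V E : Type} (r s : E → V) (n : ℕ) (f : Fin n → E) : Prop :=
  ∀ i : Fin n, ∀ h : i.1 + 1 < n, s (f i) = r (f ⟨i.1 + 1, h⟩)

def Reach {V E : Type} (r s : E → V) : V → V → Prop :=
  Relation.ReflTransGen (fun a b => ∃ e, r e = a ∧ s e = b)

def Hered {V E : Type} (r s : E → V) (H : Set V) : Prop :=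
  ∀ v ∈ H, ∀ w, Reach r s v w → w ∈ H

noncomputable def specRad {ι : Type} [Fintype ι] [DecidableEq ι] (A : Matrix ι ι ℝ) : ℝ :=
  sSup (insert 0 ((fun z : ℂ => ‖z‖) '' spectrum ℂ (A.map Complex.ofReal)))

noncomputable def subRad {V : Type} [Fintype V] [DecidableEq V]
    (A : Matrix V V ℝ) (C : Set V) : ℝ :=
  specRad (A.submatrix (Subtype.val : ↥C → V) Subtype.val)

def IsSCC {V E : Type} (r s : E → V) (C : Set V) : Prop :=
  ∃ v, C = {w | Reach r s v w ∧ Reach r s w v}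

def IsCrit {V E : Type} [Fintype V] [DecidableEq V] (r s : E → V)
    (A : Matrix V V ℝ) (C : Set V) : Prop :=
  IsSCC r s C ∧ subRad A C = specRad A

/-- C is minimal among critical components for the order D ≤ C iff DE*C ≠ ∅. -/
def IsMinCrit {V E : Type} [Fintype V] [DecidableEq V] (r s : E → V)
    (A : Matrix V V ℝ) (C : Set V) : Prop :=
  IsCrit r s A C ∧
    ∀ D : Set V, IsCrit r s A D → (∃ d ∈ D, ∃ c ∈ C, Reach r s d c) → D = C

open Polynomial
set_option linter.unusedSectionVars false
set_option maxHeartbeats 1000000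

lemma spec_eq_roots {ι : Type} [Fintype ι] [DecidableEq ι] (M : Matrix ι ι ℂ) :
    spectrum ℂ M = {μ | M.charpoly.IsRoot μ} := by
  ext μ
  have hdet : (Matrix.charpoly M).eval μ = (algebraMap ℂ (Matrix ι ι ℂ) μ - M).det := by
    rw [Matrix.charpoly, ← Polynomial.coe_evalRingHom, RingHom.map_det]
    congr 1
    ext i j
    by_cases h : i = j <;>
      simp [h, Matrix.charmatrix_apply, Matrix.algebraMap_matrix_apply,
        Matrix.diagonal_apply, Matrix.scalar_apply, Matrix.one_apply]
  rw [spectrum.mem_iff, Set.mem_setOf_eq, IsRoot, hdet, Matrix.isUnit_iff_isUnit_det,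
    isUnit_iff_ne_zero, not_ne_iff]

lemma spec_finite {ι : Type} [Fintype ι] [DecidableEq ι] (M : Matrix ι ι ℂ) :
    (spectrum ℂ M).Finite := by
  rw [spec_eq_roots]
  exact Polynomial.finite_setOf_isRoot (Matrix.charpoly_monic M).ne_zero

lemma specRad_irrel {ι : Type} {i1 i2 : Fintype ι} {d1 d2 : DecidableEq ι} (A : Matrix ι ι ℝ) :
    @specRad ι i1 d1 A = @specRad ι i2 d2 A := by
  obtain rfl : i1 = i2 := Subsingleton.elim _ _
  obtain rfl : d1 = d2 := Subsingleton.elim _ _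
  rfl

lemma specRadSet_finite {ι : Type} [Fintype ι] [DecidableEq ι] (A : Matrix ι ι ℝ) :
    (insert (0:ℝ) ((fun z : ℂ => ‖z‖) '' spectrum ℂ (A.map Complex.ofReal))).Finite :=
  ((spec_finite _).image _).insert 0

lemma specRad_mem {ι : Type} [Fintype ι] [DecidableEq ι] (A : Matrix ι ι ℝ) :
    specRad A ∈ insert (0:ℝ) ((fun z : ℂ => ‖z‖) '' spectrum ℂ (A.map Complex.ofReal)) :=
  Set.Nonempty.csSup_mem ⟨0, Set.mem_insert _ _⟩ (specRadSet_finite A)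

lemma le_specRad {ι : Type} [Fintype ι] [DecidableEq ι] (A : Matrix ι ι ℝ) {x : ℝ}
    (h : x ∈ insert (0:ℝ) ((fun z : ℂ => ‖z‖) '' spectrum ℂ (A.map Complex.ofReal))) :
    x ≤ specRad A :=
  le_csSup (specRadSet_finite A).bddAbove h

lemma specRad_nonneg {ι : Type} [Fintype ι] [DecidableEq ι] (A : Matrix ι ι ℝ) :
    0 ≤ specRad A := le_specRad A (Set.mem_insert _ _)

lemma abs_le_specRad {ι : Type} [Fintype ι] [DecidableEq ι] (A : Matrix ι ι ℝ) {μ : ℂ}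
    (h : μ ∈ spectrum ℂ (A.map Complex.ofReal)) : ‖μ‖ ≤ specRad A :=
  le_specRad A (Set.mem_insert_of_mem _ ⟨μ, h, rfl⟩)

lemma specRad_le_specRad {ι κ : Type} [Fintype ι] [DecidableEq ι] [Fintype κ] [DecidableEq κ]
    {A : Matrix ι ι ℝ} {A' : Matrix κ κ ℝ}
    (h : spectrum ℂ (A.map Complex.ofReal) ⊆ spectrum ℂ (A'.map Complex.ofReal)) :
    specRad A ≤ specRad A' :=
  csSup_le_csSup (specRadSet_finite A').bddAbove ⟨0, Set.mem_insert _ _⟩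
    (Set.insert_subset_insert (Set.image_mono h))

lemma spectrum_submatrix {ι κ : Type} [Fintype ι] [DecidableEq ι] [Fintype κ] [DecidableEq κ]
    (e : κ ≃ ι) (M : Matrix ι ι ℂ) : spectrum ℂ (M.submatrix e e) = spectrum ℂ M := by
  have : M.submatrix e e = Matrix.reindexAlgEquiv ℂ ℂ e.symm M := by
    simp [Matrix.reindexAlgEquiv_apply, Matrix.reindex_apply]
  rw [this, AlgEquiv.spectrum_eq]

lemma spec_block_subset {ι α : Type} [Fintype ι] [DecidableEq ι] [LinearOrder α]
    {M : Matrix ι ι ℂ} {b : ι → α} (h : M.BlockTriangular b) (a : α) :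
    spectrum ℂ (M.toSquareBlock b a) ⊆ spectrum ℂ M := by
  by_cases ha : a ∈ Finset.image b Finset.univ
  · intro μ hμ
    rw [spec_eq_roots] at hμ ⊢
    have hfac := h.charpoly
    exact Set.mem_setOf_eq ▸ (Set.mem_setOf_eq ▸ hμ).dvd
      (hfac ▸ Finset.dvd_prod_of_mem _ ha)
  · have : IsEmpty {i // b i = a} := by
      constructor; rintro ⟨i, hi⟩
      exact ha (Finset.mem_image.mpr ⟨i, Finset.mem_univ i, hi⟩)
    intro μ hμ
    rw [spec_eq_roots] at hμ
    have : (M.toSquareBlock b a).charpoly = 1 := by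
      rw [Matrix.charpoly, Matrix.det_isEmpty]
    simp [this, Polynomial.IsRoot] at hμ

lemma spec_exists_block {ι α : Type} [Fintype ι] [DecidableEq ι] [LinearOrder α]
    {M : Matrix ι ι ℂ} {b : ι → α} (h : M.BlockTriangular b) {μ : ℂ}
    (hμ : μ ∈ spectrum ℂ M) :
    ∃ a ∈ Finset.image b Finset.univ, μ ∈ spectrum ℂ (M.toSquareBlock b a) := by
  rw [spec_eq_roots] at hμ
  have hfac := h.charpoly
  rw [Set.mem_setOf_eq, Polynomial.IsRoot, hfac, Polynomial.eval_prod,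
    Finset.prod_eq_zero_iff] at hμ
  obtain ⟨a, ha, hz⟩ := hμ
  exact ⟨a, ha, by rw [spec_eq_roots]; exact hz⟩

section Graph

variable {V E : Type} [Fintype V] [Fintype E] [DecidableEq V] {r s : E → V}
  {A : Matrix V V ℝ} (hA : ∀ v w, A v w = Nat.card {e : E // r e = v ∧ s e = w})

include hA

lemma A_nonneg (v w : V) : 0 ≤ A v w := by rw [hA]; positivity

lemma pow_nonneg' (m : ℕ) (v w : V) : 0 ≤ (A ^ m) v w := by
  induction m generalizing v w with
  | zero => simp [Matrix.one_apply]; positivity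
  | succ k ih =>
    rw [pow_succ, Matrix.mul_apply]
    exact Finset.sum_nonneg fun u _ => mul_nonneg (ih v u) (A_nonneg hA u w)

lemma one_le_A {v w : V} (e : E) (he : r e = v ∧ s e = w) : 1 ≤ A v w := by
  have hne : Nat.card {e : E // r e = v ∧ s e = w} ≠ 0 :=
    Nat.card_ne_zero.mpr ⟨⟨⟨e, he⟩⟩, inferInstance⟩
  rw [hA]
  exact_mod_cast Nat.one_le_iff_ne_zero.mpr hne

lemma reach_pow {v w : V} (h : Reach r s v w) : ∃ m : ℕ, 1 ≤ (A ^ m) v w := by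
  induction h with
  | refl => exact ⟨0, by simp [Matrix.one_apply]⟩
  | @tail b c _ hbc ih =>
    obtain ⟨m, hm⟩ := ih
    obtain ⟨e, he⟩ := hbc
    refine ⟨m + 1, ?_⟩
    rw [pow_succ, Matrix.mul_apply]
    calc (1:ℝ) = 1 * 1 := by ring
    _ ≤ (A ^ m) v b * A b c := by
        exact mul_le_mul hm (one_le_A hA e he) zero_le_one (pow_nonneg' hA m v b)
    _ ≤ ∑ u, (A ^ m) v u * A u c :=
        Finset.single_le_sum (f := fun u => (A ^ m) v u * A u c)
          (fun u _ => mul_nonneg (pow_nonneg' hA m v u) (A_nonneg hA u c))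
          (Finset.mem_univ b)

lemma pow_diag_mul (m m' : ℕ) (v : V) :
    (A ^ m) v v * (A ^ m') v v ≤ (A ^ (m + m')) v v := by
  rw [pow_add, Matrix.mul_apply]
  exact Finset.single_le_sum (f := fun u => (A ^ m) v u * (A ^ m') u v)
    (fun u _ => mul_nonneg (pow_nonneg' hA m v u) (pow_nonneg' hA m' u v))
    (Finset.mem_univ v)

lemma pow_diag_pow {m : ℕ} {v : V} (hm : 1 ≤ (A ^ m) v v) (k : ℕ) :
    1 ≤ (A ^ (k * m)) v v := by
  induction k with
  | zero => simp [Matrix.one_apply]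
  | succ k ih =>
    have := pow_diag_mul hA (k * m) m v
    calc (1:ℝ) = 1 * 1 := by ring
    _ ≤ (A ^ (k * m)) v v * (A ^ m) v v := mul_le_mul ih hm zero_le_one (le_trans zero_le_one ih)
    _ ≤ (A ^ (k * m + m)) v v := this
    _ = (A ^ ((k + 1) * m)) v v := by ring_nf

end Graph

section Pos

variable {V E : Type} [Fintype V] [Fintype E] [DecidableEq V] {r s : E → V}
  {A : Matrix V V ℝ} (hA : ∀ v w, A v w = Nat.card {e : E // r e = v ∧ s e = w})

lemma map_pow' (N : ℕ) : (A ^ N).map (Complex.ofReal : ℝ → ℂ) =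
    (A.map Complex.ofReal) ^ N := by
  induction N with
  | zero => simp [Matrix.map_one]
  | succ k ih =>
    rw [pow_succ, pow_succ, ← ih]
    exact Matrix.map_mul (f := Complex.ofRealHom)

include hA

lemma specRad_pos (hcyc : ∃ e : E, Reach r s (s e) (r e)) : 0 < specRad A := by
  rcases (specRad_nonneg A).lt_or_eq with h | h0
  · exact h
  exfalso
  obtain ⟨e0, he0⟩ := hcyc
  obtain ⟨m, hm⟩ := reach_pow hA he0
  have h1 : 1 ≤ (A ^ (1 + m)) (r e0) (r e0) := by
    rw [pow_add, pow_one, Matrix.mul_apply]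
    calc (1:ℝ) = 1 * 1 := by ring
    _ ≤ A (r e0) (s e0) * (A ^ m) (s e0) (r e0) :=
        mul_le_mul (one_le_A hA e0 ⟨rfl, rfl⟩) hm zero_le_one (A_nonneg hA _ _)
    _ ≤ ∑ u, A (r e0) u * (A ^ m) u (r e0) :=
        Finset.single_le_sum (f := fun u => A (r e0) u * (A ^ m) u (r e0))
          (fun u _ => mul_nonneg (A_nonneg hA _ _) (pow_nonneg' hA m _ _))
          (Finset.mem_univ _)
  set B := A.map (Complex.ofReal : ℝ → ℂ) with hBdef
  have hspec : ∀ μ ∈ spectrum ℂ B, μ = 0 := by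
    intro μ hμ
    have h2 := abs_le_specRad A hμ
    rw [← h0] at h2
    exact norm_eq_zero.mp (le_antisymm h2 (norm_nonneg μ))
  have : Nonempty V := ⟨r e0⟩
  set n := Fintype.card V with hn
  have hmonic := Matrix.charpoly_monic B
  have hsplits : (Matrix.charpoly B).Splits := IsAlgClosed.splits _
  have hroots : ∀ a ∈ (Matrix.charpoly B).roots, a = 0 := by
    intro a ha
    exact hspec a (by rw [spec_eq_roots]; exact Polynomial.isRoot_of_mem_roots ha)
  have hcard : (Matrix.charpoly B).roots.card = n := by
    rw [Polynomial.splits_iff_card_roots.mp hsplits, Matrix.charpoly_natDegree_eq_dim]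
  have hXn : Matrix.charpoly B = Polynomial.X ^ n := by
    have hrep : (Matrix.charpoly B).roots = Multiset.replicate n 0 :=
      Multiset.eq_replicate.mpr ⟨hcard, hroots⟩
    calc Matrix.charpoly B
        = ((Matrix.charpoly B).roots.map fun a => Polynomial.X - Polynomial.C a).prod :=
          hsplits.eq_prod_roots_of_monic hmonic
    _ = Polynomial.X ^ n := by
          rw [hrep, Multiset.map_replicate, Multiset.prod_replicate]
          simp
  have hBn : B ^ n = 0 := by
    have h3 := Matrix.aeval_self_charpoly B
    rwa [hXn, map_pow, Polynomial.aeval_X] at h3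
  have hN : (A ^ (n * (1 + m))) (r e0) (r e0) = 0 := by
    have hBN : B ^ (n * (1 + m)) = 0 := by
      have : n * (1 + m) = n + (n * (1 + m) - n) := by
        have : n ≤ n * (1 + m) := Nat.le_mul_of_pos_right n (by omega)
        omega
      rw [this, pow_add, hBn, zero_mul]
    have := congrArg (fun M => M (r e0) (r e0)) ((map_pow' (n * (1 + m))).trans hBN)
    simpa [Matrix.map_apply, Complex.ofReal_eq_zero] using this
  have := pow_diag_pow hA h1 n
  rw [hN] at this
  linarith

end Pos

section SCCdef

variable {V E : Type} [Fintype V] [DecidableEq V] (r s : E → V)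

def sccS (v : V) : Set V := {w | Reach r s v w ∧ Reach r s w v}

lemma mem_sccS_self (v : V) : v ∈ sccS r s v :=
  ⟨Relation.ReflTransGen.refl, Relation.ReflTransGen.refl⟩

variable {r s}

lemma sccS_eq_of_mem {v w : V} (h : w ∈ sccS r s v) : sccS r s w = sccS r s v := by
  obtain ⟨h1, h2⟩ := h
  ext u
  exact ⟨fun ⟨a, b⟩ => ⟨h1.trans a, b.trans h2⟩, fun ⟨a, b⟩ => ⟨h2.trans a, b.trans h1⟩⟩

lemma mem_sccS_comm {v w : V} : v ∈ sccS r s w ↔ w ∈ sccS r s v :=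
  ⟨fun ⟨a, b⟩ => ⟨b, a⟩, fun ⟨a, b⟩ => ⟨b, a⟩⟩

variable (r s)

def anc (v : V) : Set V := {u | Reach r s u v}

noncomputable instance : Fintype (Set V) := Fintype.ofFinite _

noncomputable def bfun (v : V) : Lex (ℕ × ℕ) :=
  toLex ((anc r s v).ncard, (Fintype.equivFin (Set V) (sccS r s v)).val)

variable {r s}

lemma anc_mono {v w : V} (h : Reach r s v w) : anc r s v ⊆ anc r s w :=
  fun _ hu => Relation.ReflTransGen.trans hu h

lemma bfun_le_of_reach {i j : V} (h : Reach r s i j) : bfun r s i ≤ bfun r s j := by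
  have hsub := anc_mono (r := r) (s := s) h
  have hle : (anc r s i).ncard ≤ (anc r s j).ncard :=
    Set.ncard_le_ncard hsub (Set.toFinite _)
  rcases hle.lt_or_eq with hlt | heq
  · exact le_of_lt (Prod.Lex.lt_iff.mpr (Or.inl hlt))
  · have hancs : anc r s i = anc r s j :=
      Set.eq_of_subset_of_ncard_le hsub heq.ge (Set.toFinite _)
    have hji : Reach r s j i := by
      have : j ∈ anc r s i := hancs ▸ (Relation.ReflTransGen.refl : Reach r s j j)
      exact this
    have : sccS r s j = sccS r s i := sccS_eq_of_mem ⟨h, hji⟩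
    rw [bfun, bfun, this, hancs]

lemma bfun_eq_iff {i j : V} : bfun r s i = bfun r s j ↔ j ∈ sccS r s i := by
  constructor
  · intro h
    have h2 := congrArg (fun x => (ofLex x).2) h
    simp only [bfun] at h2
    have : sccS r s i = sccS r s j := by
      have := Fin.val_injective h2
      exact (Fintype.equivFin (Set V)).injective this
    exact this ▸ mem_sccS_self r s j
  · intro h
    have hscc : sccS r s j = sccS r s i := sccS_eq_of_mem h
    have hancs : anc r s i = anc r s j :=
      le_antisymm (anc_mono h.1) (anc_mono h.2)
    rw [bfun, bfun, hscc, hancs]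

end SCCdef

/-- If E has a cycle, K is the union of the minimal critical components and H is its
hereditary closure, then ρ(A_{E⁰∖H}) < ρ(A). -/
theorem stmt12 {V E : Type} [Fintype V] [Fintype E] [DecidableEq V] (r s : E → V)
    (A : Matrix V V ℝ)
    (hA : ∀ v w, A v w = Nat.card {e : E // r e = v ∧ s e = w})
    (hcyc : ∃ e : E, Reach r s (s e) (r e))
    (K : Set V) (hK : K = {v | ∃ C : Set V, IsMinCrit r s A C ∧ v ∈ C})
    (H : Set V) (hHdef : H = {w | ∃ v ∈ K, Reach r s v w}) :
    subRad A Hᶜ < specRad A := by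
  -- H is hereditary
  have hH : ∀ v ∈ H, ∀ w, Reach r s v w → w ∈ H := by
    intro v hv w hvw
    rw [hHdef] at hv ⊢
    obtain ⟨k, hk, hkv⟩ := hv
    exact ⟨k, hk, hkv.trans hvw⟩
  set B : Matrix V V ℂ := A.map Complex.ofReal with hBdef
  have hedge : ∀ i j : V, B i j ≠ 0 → Reach r s i j := by
    intro i j hne
    have hAij : A i j ≠ 0 := by
      simpa [hBdef, Matrix.map_apply, Complex.ofReal_eq_zero] using hne
    rw [hA i j] at hAij
    have hnz : Nat.card {e : E // r e = i ∧ s e = j} ≠ 0 := by exact_mod_cast hAij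
    obtain ⟨⟨e, he1, he2⟩⟩ := (Nat.card_ne_zero.mp hnz).1
    exact Relation.ReflTransGen.single ⟨e, he1, he2⟩
  have hBT : B.BlockTriangular (bfun r s) := by
    intro i j hlt
    by_contra hne
    exact absurd (bfun_le_of_reach (hedge i j hne)) (not_le.mpr hlt)
  -- the square block at bfun v is the scc of v
  have hsq : ∀ v : V, spectrum ℂ
      ((A.submatrix (Subtype.val : ↥(sccS r s v) → V) (Subtype.val : ↥(sccS r s v) → V)).map Complex.ofReal)
      = spectrum ℂ (B.toSquareBlock (bfun r s) (bfun r s v)) := by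
    intro v
    have hiff : ∀ i : V, bfun r s i = bfun r s v ↔ i ∈ sccS r s v := by
      intro i
      rw [bfun_eq_iff, mem_sccS_comm]
    set g : ↥(sccS r s v) ≃ {i : V // bfun r s i = bfun r s v} :=
      (Equiv.subtypeEquivRight hiff).symm with hg
    have hmx : (A.submatrix (Subtype.val : ↥(sccS r s v) → V) (Subtype.val : ↥(sccS r s v) → V)).map Complex.ofReal
        = (B.toSquareBlock (bfun r s) (bfun r s v)).submatrix g g := by
      ext i j
      rfl
    rw [hmx, spectrum_submatrix]
  have hsub_le : ∀ v : V, subRad A (sccS r s v) ≤ specRad A := by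
    intro v
    apply specRad_le_specRad
    rw [hsq v]
    exact spec_block_subset hBT (bfun r s v)
  -- criticality forces membership in H
  have hcrit_H : ∀ v : V, IsCrit r s A (sccS r s v) → v ∈ H := by
    intro v hv
    set T : Set V := {u | IsCrit r s A (sccS r s u) ∧ Reach r s u v} with hT
    have hvT : v ∈ T := ⟨hv, Relation.ReflTransGen.refl⟩
    obtain ⟨m, hmT, hmin⟩ :=
      Set.Finite.exists_minimalFor (anc r s) T (Set.toFinite T) ⟨v, hvT⟩
    have hMC : IsMinCrit r s A (sccS r s m) := by
      refine ⟨hmT.1, ?_⟩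
      rintro D hD ⟨d, hd, c, hc, hdc⟩
      obtain ⟨u, hDu⟩ := hD.1
      have hDu' : D = sccS r s u := hDu
      rw [hDu'] at hD hd
      have hud : Reach r s u d := hd.1
      have hum : Reach r s u m := (hud.trans hdc).trans hc.2
      have huT : u ∈ T := ⟨hD, hum.trans hmT.2⟩
      have heq := hmin (j := u) huT (anc_mono hum)
      have hmu : Reach r s m u := by
        have : m ∈ anc r s u := heq (Relation.ReflTransGen.refl : Reach r s m m)
        exact this
      rw [hDu']
      exact sccS_eq_of_mem ⟨hmu, hum⟩
    have hmK : m ∈ K := by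
      rw [hK]
      exact ⟨sccS r s m, hMC, mem_sccS_self r s m⟩
    rw [hHdef]
    exact ⟨m, hmK, hmT.2⟩
  have hlt_scc : ∀ v ∈ Hᶜ, subRad A (sccS r s v) < specRad A := by
    intro v hv
    rcases (hsub_le v).lt_or_eq with h | h
    · exact h
    · exact absurd (hcrit_H v ⟨⟨v, rfl⟩, h⟩) hv
  -- decompose the matrix on Hᶜ
  set A' : Matrix ↥Hᶜ ↥Hᶜ ℝ := A.submatrix Subtype.val Subtype.val with hA'
  have hgoal : subRad A Hᶜ = specRad A' := by
    rw [hA']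
    unfold subRad
    exact specRad_irrel _
  have hmem := specRad_mem A'
  rcases Set.mem_insert_iff.mp hmem with h0 | ⟨μ, hμ, habs⟩
  · rw [hgoal, h0]
    exact specRad_pos hA hcyc
  · set B' : Matrix ↥Hᶜ ↥Hᶜ ℂ := A'.map Complex.ofReal with hB'
    have hBT' : B'.BlockTriangular (bfun r s ∘ Subtype.val) := by
      intro i j hlt
      exact hBT hlt
    obtain ⟨a, ha, hμa⟩ := spec_exists_block hBT' hμ
    obtain ⟨i0, -, hi0⟩ := Finset.mem_image.mp ha
    set v0 : V := i0.1 with hv0def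
    have hv0 : v0 ∈ Hᶜ := i0.2
    have hsccin : ∀ w ∈ sccS r s v0, w ∈ Hᶜ := by
      intro w hw hwH
      exact hv0 (hH w hwH v0 hw.2)
    have hmemscc : ∀ i : V, bfun r s i = a ↔ i ∈ sccS r s v0 := by
      intro i
      rw [← hi0]
      exact (bfun_eq_iff (r := r) (s := s)).trans mem_sccS_comm
    set g2 : ↥(sccS r s v0) ≃ {i : ↥Hᶜ // (bfun r s ∘ Subtype.val) i = a} :=
      { toFun := fun w => ⟨⟨w.1, hsccin w.1 w.2⟩, (hmemscc w.1).mpr w.2⟩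
        invFun := fun i => ⟨i.1.1, (hmemscc i.1.1).mp i.2⟩
        left_inv := fun w => Subtype.ext rfl
        right_inv := fun i => Subtype.ext (Subtype.ext rfl) } with hg2
    have hspec2 : spectrum ℂ
        ((A.submatrix (Subtype.val : ↥(sccS r s v0) → V) (Subtype.val : ↥(sccS r s v0) → V)).map Complex.ofReal)
        = spectrum ℂ (B'.toSquareBlock (bfun r s ∘ Subtype.val) a) := by
      have hmx : (A.submatrix (Subtype.val : ↥(sccS r s v0) → V) (Subtype.val : ↥(sccS r s v0) → V)).map Complex.ofReal
          = (B'.toSquareBlock (bfun r s ∘ Subtype.val) a).submatrix g2 g2 := by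
        ext i j
        rfl
      rw [hmx, spectrum_submatrix]
    have hle2 : ‖μ‖ ≤ subRad A (sccS r s v0) := by
      apply abs_le_specRad
      rw [hspec2]
      exact hμa
    calc subRad A Hᶜ = specRad A' := hgoal
    _ = ‖μ‖ := habs.symm
    _ ≤ subRad A (sccS r s v0) := hle2
    _ < specRad A := hlt_scc v0 hv0
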